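/- If a monomial ideal I generated in a single degree has linear quotients with respect to an ordering u_1,...,u_r of its minimal generators, then I has quotients with linear resolution with respect to that ordering: I has a linear resolution and for each j = 2,...,r the colon ideal (u_1,...,u_{j-1}) : u_j has a linear resolution. -/

import Mathlib

/-- A monomial in `n` variables, given by its exponent vector. -/
abbrev Mon (n : ℕ) := Fin n → ℕ

/-- Total degree of a monomial. -/
def mdeg {n : ℕ} (u : Mon n) : ℕ := ∑ i, u i

/-- The exponent vector of `x_j * (u / x_i)`. -/
def exch {n : ℕ} (u : Mon n) (i j : Fin n) : Mon n :=
  fun l => u l - (if l = i then 1 else 0) + (if l = j then 1 else 0)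

/-- Membership of the monomial `w` in the monomial ideal generated by the set `G`. -/
def memI {n : ℕ} (G : Set (Mon n)) (w : Mon n) : Prop :=
  ∃ u ∈ G, ∀ l, u l ≤ w l

/-- `G` (the set of minimal generators, all of one degree) is polymatroidal: the
exchange property holds. -/
def IsPolymatroidal {n : ℕ} (G : Set (Mon n)) : Prop :=
  ∀ u ∈ G, ∀ v ∈ G, ∀ i, v i < u i → ∃ j, u j < v j ∧ memI G (exch u i j)

/-- The (strict) lexicographic order on monomials of a common degree, induced by the
variable ordering `x_{σ 0} > x_{σ 1} > ⋯ > x_{σ (n-1)}`. -/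
def lexGT {n : ℕ} (σ : Fin n → Fin n) (u v : Mon n) : Prop :=
  ∃ i, v (σ i) < u (σ i) ∧ ∀ k, k < i → u (σ k) = v (σ k)

/-- `u ≥_lex v` with respect to the variable ordering given by `σ`. -/
def lexGE {n : ℕ} (σ : Fin n → Fin n) (u v : Mon n) : Prop :=
  u = v ∨ lexGT σ u v

/-- The (strict) reverse lexicographic order on monomials of a common degree, induced by
the variable ordering `x_{σ 0} > x_{σ 1} > ⋯ > x_{σ (n-1)}`. -/
def rlexGT {n : ℕ} (σ : Fin n → Fin n) (u v : Mon n) : Prop :=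
  ∃ i, u (σ i) < v (σ i) ∧ ∀ k, i < k → u (σ k) = v (σ k)

/-- `G` has linear quotients with respect to the order `gt`: for every `u ∈ G` the colon
ideal `(v ∈ G : gt v u) : u` is generated by variables, i.e. for every `v ∈ G` with
`gt v u` there is a variable `x_i` dividing `v : u` with `x_i·u` in the ideal generated
by the `gt`-larger generators. -/
def LinQuot {n : ℕ} (G : Set (Mon n)) (gt : Mon n → Mon n → Prop) : Prop :=
  ∀ u ∈ G, ∀ v ∈ G, gt v u →
    ∃ i, u i < v i ∧
      ∃ w ∈ G, gt w u ∧ ∀ l, w l ≤ u l + (if l = i then 1 else 0)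

/-- The monomial of `K[x_1,…,x_n]` with exponent vector `u`. -/
noncomputable def monOf {n : ℕ} (K : Type) [Field K] (u : Mon n) :
    MvPolynomial (Fin n) K :=
  MvPolynomial.monomial (Finsupp.equivFunOnFinite.symm u) 1

/-- `I` has a linear resolution starting in degree `d`: there is an exact complex of
finite free modules `⋯ → S^{b₂} → S^{b₁} → S^{b₀} → S → S/I` whose first map is given
by homogeneous polynomials of degree `d` generating `I` and whose other differentials
are matrices with entries homogeneous of degree `1` (so the resolution is minimal and
linear, i.e. `F_i = S(-d-i)^{b_i}`). -/
def HasLinearResolution {n : ℕ} (K : Type) [Field K] (d : ℕ)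
    (I : Ideal (MvPolynomial (Fin n) K)) : Prop :=
  ∃ (b : ℕ → ℕ) (g : Fin (b 0) → MvPolynomial (Fin n) K)
    (A : ∀ i : ℕ, Matrix (Fin (b i)) (Fin (b (i + 1))) (MvPolynomial (Fin n) K)),
    (∀ j, (g j).IsHomogeneous d) ∧
    (∀ i j l, ((A i) j l).IsHomogeneous 1) ∧
    I = Ideal.span (Set.range g) ∧
    (∀ x : Fin (b 0) → MvPolynomial (Fin n) K,
      (∑ j, g j * x j = 0) ↔ ∃ y, (A 0).mulVec y = x) ∧
    (∀ i : ℕ, ∀ x : Fin (b (i + 1)) → MvPolynomial (Fin n) K,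
      ((A i).mulVec x = 0) ↔ ∃ y, (A (i + 1)).mulVec y = x)

namespace LRAux

open MvPolynomial
variable {n : ℕ} (K : Type) [Field K]

structure LRData (d : ℕ) (I : Ideal (MvPolynomial (Fin n) K)) : Type 1 where
  ι : ℕ → Type
  [inst : ∀ i, Fintype (ι i)]
  g : ι 0 → MvPolynomial (Fin n) K
  A : ∀ i : ℕ, Matrix (ι i) (ι (i + 1)) (MvPolynomial (Fin n) K)
  hg : ∀ j, (g j).IsHomogeneous d
  hA : ∀ i j l, ((A i) j l).IsHomogeneous 1
  hspan : I = Ideal.span (Set.range g)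
  hsyz : ∀ x : ι 0 → MvPolynomial (Fin n) K,
    (∑ j, g j * x j = 0) ↔ ∃ y, (A 0).mulVec y = x
  hex : ∀ (i : ℕ) (x : ι (i + 1) → MvPolynomial (Fin n) K),
    ((A i).mulVec x = 0) ↔ ∃ y, (A (i + 1)).mulVec y = x

attribute [instance] LRData.inst

lemma lr_to_hlr {d : ℕ} {I : Ideal (MvPolynomial (Fin n) K)} (h : Nonempty (LRData K d I)) :
    HasLinearResolution K d I := by
  obtain ⟨D⟩ := h
  classical
  let e : ∀ i, D.ι i ≃ Fin (Fintype.card (D.ι i)) := fun i => Fintype.equivFin _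
  have hmv : ∀ (i : ℕ) (v : Fin (Fintype.card (D.ι (i+1))) → MvPolynomial (Fin n) K)
      (w : Fin (Fintype.card (D.ι i)) → MvPolynomial (Fin n) K),
      ((D.A i).submatrix (e i).symm (e (i+1)).symm).mulVec v = w ↔
        (D.A i).mulVec (v ∘ (e (i+1))) = w ∘ (e i) := by
    intro i v w
    rw [Matrix.submatrix_mulVec_equiv]
    constructor
    · intro H
      funext a
      have := congrFun H (e i a)
      simpa using this
    · intro H
      funext p
      have := congrFun H ((e i).symm p)
      simpa using this
  refine ⟨fun i => Fintype.card (D.ι i), fun j => D.g ((e 0).symm j),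
    fun i => (D.A i).submatrix (e i).symm (e (i+1)).symm,
    fun j => D.hg _, fun i j l => D.hA _ _ _, ?_, ?_, ?_⟩
  · refine D.hspan.trans ?_
    congr 1
    exact (Function.Surjective.range_comp (e 0).symm.surjective _).symm
  · intro x
    have hsum : ∑ j, D.g ((e 0).symm j) * x j = ∑ j, D.g j * (x ∘ (e 0)) j :=
      Fintype.sum_equiv (e 0).symm _ _ (fun j => by simp)
    rw [hsum, D.hsyz]
    constructor
    · rintro ⟨y, hy⟩
      refine ⟨y ∘ (e 1).symm, (hmv 0 _ _).mpr ?_⟩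
      rw [show (y ∘ (e 1).symm) ∘ (e 1) = y from funext fun q => by simp]
      exact hy
    · rintro ⟨y, hy⟩
      exact ⟨y ∘ (e 1), (hmv 0 y x).mp hy⟩
  · intro i x
    constructor
    · intro hx
      have h0 : (D.A i).mulVec (x ∘ (e (i+1))) = 0 := by
        have := (hmv i x 0).mp hx
        simpa using this
      obtain ⟨y, hy⟩ := (D.hex i _).mp h0
      refine ⟨y ∘ (e (i+2)).symm, (hmv (i+1) _ x).mpr ?_⟩
      rw [show (y ∘ (e (i+2)).symm) ∘ (e (i+2)) = y from funext fun q => by simp]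
      exact hy
    · rintro ⟨y, hy⟩
      have h1 := (hmv (i+1) y x).mp hy
      have h0 : (D.A i).mulVec (x ∘ (e (i+1))) = 0 := (D.hex i _).mpr ⟨_, h1⟩
      refine (hmv i x 0).mpr ?_
      rw [h0]
      funext a
      simp


open MvPolynomial
variable {n : ℕ} (K : Type) [Field K]

lemma lr_bot (d : ℕ) : Nonempty (LRData K d (⊥ : Ideal (MvPolynomial (Fin n) K))) := by
  refine ⟨⟨fun _ => Empty, fun j => j.elim, fun i => (fun j => j.elim), fun j => j.elim,
    fun i j => j.elim, ?_, ?_, ?_⟩⟩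
  · rw [Set.range_eq_empty, Ideal.span_empty]
  · intro x
    simp only [Finset.univ_eq_empty, Finset.sum_empty, true_iff]
    exact ⟨fun j => j.elim, funext fun j => j.elim⟩
  · intro i x
    constructor
    · intro _
      exact ⟨fun j => j.elim, funext fun j => j.elim⟩
    · intro _
      funext j
      exact j.elim

lemma homogeneousComponent_mul_left {a b : ℕ} {p q : MvPolynomial (Fin n) K}
    (hp : p.IsHomogeneous a) :
    homogeneousComponent (a + b) (p * q) = p * homogeneousComponent b q := by
  classical
  ext c
  rw [coeff_homogeneousComponent]
  rw [coeff_mul, coeff_mul]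
  have key : ∀ x ∈ Finset.HasAntidiagonal.antidiagonal c,
      coeff x.1 p * coeff x.2 (homogeneousComponent b q) =
        if c.degree = a + b then coeff x.1 p * coeff x.2 q else 0 := by
    rintro ⟨c1, c2⟩ hx
    have hc : c1 + c2 = c := Finset.HasAntidiagonal.mem_antidiagonal.mp hx
    simp only [coeff_homogeneousComponent]
    by_cases h1 : coeff c1 p = 0
    · simp [h1]
    · have hd1 : c1.degree = a := by rw [Finsupp.degree_eq_weight_one]; exact hp h1
      have hdeg : c.degree = c1.degree + c2.degree := by
        rw [← hc]
        simp [Finsupp.degree_eq_weight_one, map_add]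
      by_cases h2 : c2.degree = b
      · have : c.degree = a + b := by rw [hdeg, hd1, h2]
        simp [h2, this]
      · have : ¬ c.degree = a + b := by
          rw [hdeg, hd1]
          intro h
          exact h2 (by omega)
        simp [h2, this]
  rw [Finset.sum_congr rfl key]
  by_cases hcd : c.degree = a + b <;> simp [hcd]

lemma lift_homog_row {ι : Type} [Fintype ι] {g : ι → MvPolynomial (Fin n) K} {a b : ℕ}
    (hg : ∀ j, (g j).IsHomogeneous a) {t : MvPolynomial (Fin n) K}
    (ht : t.IsHomogeneous (a + b)) {y : ι → MvPolynomial (Fin n) K}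
    (hy : ∑ j, g j * y j = t) :
    ∑ j, g j * homogeneousComponent b (y j) = t := by
  have : ∑ j, g j * homogeneousComponent b (y j)
      = ∑ j, homogeneousComponent (a + b) (g j * y j) := by
    refine Finset.sum_congr rfl fun j _ => ?_
    rw [homogeneousComponent_mul_left K (hg j)]
  rw [this, ← map_sum, hy, homogeneousComponent_of_mem ht]
  simp

lemma lift_homog_mulVec {ι κ : Type} [Fintype ι] [Fintype κ]
    {M : Matrix κ ι (MvPolynomial (Fin n) K)} {a b : ℕ}
    (hM : ∀ j l, (M j l).IsHomogeneous a) {x : κ → MvPolynomial (Fin n) K}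
    (hx : ∀ j, (x j).IsHomogeneous (a + b)) {y : ι → MvPolynomial (Fin n) K}
    (hy : M.mulVec y = x) :
    M.mulVec (fun l => homogeneousComponent b (y l)) = x := by
  funext j
  have := congrFun hy j
  rw [Matrix.mulVec, dotProduct] at this ⊢
  exact lift_homog_row K (fun l => hM j l) (hx j) this


open MvPolynomial
variable {n : ℕ} (K : Type) [Field K]
variable {d : ℕ} {I J : Ideal (MvPolynomial (Fin n) K)} {m : MvPolynomial (Fin n) K}

/-- The property of a candidate comparison-map component needed to continue lifting. -/
def Killed (hI : LRData K d I) (hJ : LRData K 1 J) :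
    ∀ i, Matrix (hI.ι i) (hJ.ι i) (MvPolynomial (Fin n) K) → Prop
  | 0, M => ∀ x : hJ.ι 0 → MvPolynomial (Fin n) K,
      (∑ k, hJ.g k * x k = 0) → ∑ j, hI.g j * M.mulVec x j = 0
  | (i+1), M => ∀ x : hJ.ι (i+1) → MvPolynomial (Fin n) K,
      ((hJ.A i).mulVec x = 0) → (hI.A i).mulVec (M.mulVec x) = 0

lemma step_exists (hI : LRData K d I) (hJ : LRData K 1 J) (i : ℕ)
    (M : Matrix (hI.ι i) (hJ.ι i) (MvPolynomial (Fin n) K))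
    (hH : ∀ j k, (M j k).IsHomogeneous 1) (hK : Killed K hI hJ i M) :
    ∃ M' : Matrix (hI.ι (i+1)) (hJ.ι (i+1)) (MvPolynomial (Fin n) K),
      (∀ j k, (M' j k).IsHomogeneous 1) ∧ Killed K hI hJ (i+1) M' ∧
        hI.A i * M' = M * hJ.A i := by
  classical
  have hcol : ∀ k' : hJ.ι (i+1), ∃ col : hI.ι (i+1) → MvPolynomial (Fin n) K,
      (∀ j, (col j).IsHomogeneous 1) ∧
        (hI.A i).mulVec col = M.mulVec (fun k => hJ.A i k k') := by
    intro k'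
    set t : hI.ι i → MvPolynomial (Fin n) K := M.mulVec (fun k => hJ.A i k k') with ht
    have htH : ∀ j, (t j).IsHomogeneous 2 := by
      intro j
      refine IsHomogeneous.sum _ _ _ fun k _ => ?_
      exact (hH j k).mul (hJ.hA i k k')
    have hpre : ∃ y, (hI.A i).mulVec y = t := by
      cases i with
      | zero =>
        refine (hI.hsyz t).mp (hK _ ?_)
        refine (hJ.hsyz _).mpr ⟨Pi.single k' 1, ?_⟩
        funext k
        simp
      | succ i =>
        refine (hI.hex i t).mp (hK _ ?_)
        refine (hJ.hex i _).mpr ⟨Pi.single k' 1, ?_⟩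
        funext k
        simp
    obtain ⟨y, hy⟩ := hpre
    exact ⟨fun l => homogeneousComponent 1 (y l),
      fun l => homogeneousComponent_isHomogeneous _ _, lift_homog_mulVec K (hI.hA i) htH hy⟩
  choose col hcH hcE using hcol
  have hlink : hI.A i * (Matrix.of fun j k' => col k' j) = M * hJ.A i := by
    refine Matrix.ext fun j k' => ?_
    rw [Matrix.mul_apply, Matrix.mul_apply]
    exact congrFun (hcE k') j
  refine ⟨Matrix.of fun j k' => col k' j, fun j k' => hcH k' j, ?_, hlink⟩
  intro x hx
  rw [Matrix.mulVec_mulVec, hlink, ← Matrix.mulVec_mulVec, hx, Matrix.mulVec_zero]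

lemma phi_exists (hI : LRData K d I) (hJ : LRData K 1 J)
    (hcolon : ∀ s, s * m ∈ I ↔ s ∈ J) (hm : m.IsHomogeneous d) :
    ∃ phi : ∀ i, Matrix (hI.ι i) (hJ.ι i) (MvPolynomial (Fin n) K),
      (∀ i j k, (phi i j k).IsHomogeneous 1) ∧
      (∀ k, ∑ j, hI.g j * phi 0 j k = m * hJ.g k) ∧
      (∀ i, hI.A i * phi (i+1) = phi i * hJ.A i) := by
  classical
  have key0 : ∀ k : hJ.ι 0, ∃ col : hI.ι 0 → MvPolynomial (Fin n) K,
      (∀ j, (col j).IsHomogeneous 1) ∧ ∑ j, hI.g j * col j = m * hJ.g k := by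
    intro k
    have hkJ : hJ.g k ∈ J := hJ.hspan.ge (Ideal.subset_span ⟨k, rfl⟩)
    have hmem : hJ.g k * m ∈ I := (hcolon _).mpr hkJ
    have hmem2 : hJ.g k * m ∈ Submodule.span (MvPolynomial (Fin n) K) (Set.range hI.g) :=
      hI.hspan.le hmem
    rw [Submodule.mem_span_range_iff_exists_fun] at hmem2
    obtain ⟨c, hc⟩ := hmem2
    have hc' : ∑ j, hI.g j * c j = m * hJ.g k := by
      rw [mul_comm m, ← hc]
      exact Finset.sum_congr rfl fun j _ => by rw [smul_eq_mul, mul_comm]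
    exact ⟨fun j => homogeneousComponent 1 (c j),
      fun j => homogeneousComponent_isHomogeneous _ _,
      lift_homog_row K hI.hg (hm.mul (hJ.hg k)) hc'⟩
  choose col0 h0H h0E using key0
  have h0K : Killed K hI hJ 0 (Matrix.of fun j k => col0 k j) := by
    intro x hx
    have e0 : ∀ j, hI.g j * (Matrix.of fun j k => col0 k j).mulVec x j
        = ∑ k, hI.g j * col0 k j * x k := fun j => by
      rw [Matrix.mulVec, dotProduct, Finset.mul_sum]
      exact Finset.sum_congr rfl fun k _ => by rw [Matrix.of_apply]; ring
    rw [Finset.sum_congr rfl (fun j _ => e0 j), Finset.sum_comm]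
    have e2 : ∀ k ∈ Finset.univ, (∑ j, hI.g j * col0 k j * x k) = m * (hJ.g k * x k) :=
      fun k _ => by rw [← Finset.sum_mul, h0E k, mul_assoc]
    rw [Finset.sum_congr rfl e2, ← Finset.mul_sum, hx, mul_zero]
  choose step hsH hsK hsL using step_exists K hI hJ
  let F : ∀ i, Σ' M : Matrix (hI.ι i) (hJ.ι i) (MvPolynomial (Fin n) K),
      (∀ j k, (M j k).IsHomogeneous 1) ∧ Killed K hI hJ i M :=
    fun i => Nat.rec ⟨Matrix.of fun j k => col0 k j, fun j k => h0H k j, h0K⟩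
      (fun i p => ⟨step i p.1 p.2.1 p.2.2, hsH i p.1 p.2.1 p.2.2, hsK i p.1 p.2.1 p.2.2⟩) i
  refine ⟨fun i => (F i).1, fun i => (F i).2.1, fun k => h0E k, fun i => hsL i (F i).1 (F i).2.1 (F i).2.2⟩


open MvPolynomial Matrix
variable {n : ℕ} (K : Type) [Field K]
variable {d : ℕ} {I J : Ideal (MvPolynomial (Fin n) K)} {m : MvPolynomial (Fin n) K}

/-- Generic exactness of a mapping cone at interior levels. -/
lemma cone_ex {S₀ : Type} [CommRing S₀] {κ0 κ1 κ2 γ1 γ2 γ3 : Type}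
    [Fintype κ0] [Fintype κ1] [Fintype κ2] [Fintype γ1] [Fintype γ2] [Fintype γ3]
    (B0 : Matrix κ0 κ1 S₀) (B1 : Matrix κ1 κ2 S₀) (A1 : Matrix γ1 γ2 S₀)
    (A2 : Matrix γ2 γ3 S₀) (P1 : Matrix γ1 κ1 S₀) (P2 : Matrix γ2 κ2 S₀)
    (hK : ∀ x, B0.mulVec x = 0 ↔ ∃ y, B1.mulVec y = x)
    (hG : ∀ x, A1.mulVec x = 0 ↔ ∃ y, A2.mulVec y = x)
    (hlink : A1 * P2 = P1 * B1) (x : κ1 ⊕ γ2 → S₀) :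
    (Matrix.fromBlocks (-B0) 0 P1 A1).mulVec x = 0 ↔
      ∃ y, (Matrix.fromBlocks (-B1) 0 P2 A2).mulVec y = x := by
  have hxel : x = Sum.elim (x ∘ Sum.inl) (x ∘ Sum.inr) := funext fun p => by cases p <;> rfl
  constructor
  · intro hx
    rw [hxel, Matrix.fromBlocks_mulVec] at hx
    have h1 : (-B0).mulVec (x ∘ Sum.inl) + (0 : Matrix κ0 γ2 S₀).mulVec (x ∘ Sum.inr) = 0 :=
      funext fun p => congrFun hx (Sum.inl p)
    have h2 : P1.mulVec (x ∘ Sum.inl) + A1.mulVec (x ∘ Sum.inr) = 0 :=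
      funext fun p => congrFun hx (Sum.inr p)
    rw [Matrix.zero_mulVec, add_zero, Matrix.neg_mulVec, neg_eq_zero] at h1
    obtain ⟨yK, hyK⟩ := (hK _).mp h1
    have h3 : A1.mulVec (x ∘ Sum.inr + P2.mulVec yK) = 0 := by
      rw [Matrix.mulVec_add, Matrix.mulVec_mulVec, hlink, ← Matrix.mulVec_mulVec, hyK]
      rw [add_comm] at h2
      exact h2
    obtain ⟨yG, hyG⟩ := (hG _).mp h3
    refine ⟨Sum.elim (-yK) yG, ?_⟩
    rw [Matrix.fromBlocks_mulVec, Sum.elim_comp_inl, Sum.elim_comp_inr]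
    funext p
    cases p with
    | inl p =>
      simp only [Sum.elim_inl, Matrix.zero_mulVec, add_zero, Matrix.neg_mulVec,
        Matrix.mulVec_neg, neg_neg, Pi.add_apply, Pi.zero_apply]
      exact congrFun hyK p
    | inr p =>
      simp only [Sum.elim_inr, Matrix.mulVec_neg, hyG, Pi.add_apply, Pi.neg_apply,
        Function.comp_apply]
      ring
  · rintro ⟨y, hy⟩
    rw [hxel] at hy ⊢
    have hyel : y = Sum.elim (y ∘ Sum.inl) (y ∘ Sum.inr) := funext fun p => by cases p <;> rfl
    rw [hyel, Matrix.fromBlocks_mulVec] at hy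
    have h1 : x ∘ Sum.inl = (-B1).mulVec (y ∘ Sum.inl) := by
      funext p
      have := congrFun hy (Sum.inl p)
      simp only [Sum.elim_inl, Matrix.zero_mulVec, add_zero] at this
      exact this.symm
    have h2 : x ∘ Sum.inr = P2.mulVec (y ∘ Sum.inl) + A2.mulVec (y ∘ Sum.inr) := by
      funext p
      exact (congrFun hy (Sum.inr p)).symm
    rw [Matrix.fromBlocks_mulVec, Sum.elim_comp_inl, Sum.elim_comp_inr]
    have c1 : (-B0).mulVec (x ∘ Sum.inl) + (0 : Matrix κ0 γ2 S₀).mulVec (x ∘ Sum.inr) = 0 := by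
      rw [Matrix.zero_mulVec, add_zero, h1, Matrix.neg_mulVec, Matrix.neg_mulVec,
        Matrix.mulVec_neg, neg_neg]
      exact (hK _).mpr ⟨_, rfl⟩
    have c2 : P1.mulVec (x ∘ Sum.inl) + A1.mulVec (x ∘ Sum.inr) = 0 := by
      rw [h1, h2, Matrix.mulVec_add, Matrix.neg_mulVec, Matrix.mulVec_neg,
        Matrix.mulVec_mulVec, Matrix.mulVec_mulVec, Matrix.mulVec_mulVec, ← hlink]
      have h4 : A1.mulVec (A2.mulVec (y ∘ Sum.inr)) = 0 := (hG _).mpr ⟨_, rfl⟩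
      rw [Matrix.mulVec_mulVec] at h4
      rw [h4, add_zero]
      simp
    funext p
    cases p with
    | inl p => exact congrFun c1 p
    | inr p => exact congrFun c2 p

/-- Augmented index family: `Unit` in degree `0`, then the resolution indices. -/
def pi' (D : LRData K d I) : ℕ → Type
  | 0 => Unit
  | (i+1) => D.ι i

instance (D : LRData K d I) (i : ℕ) : Fintype (pi' K D i) := by
  cases i with
  | zero => exact (inferInstance : Fintype Unit)
  | succ i => exact (inferInstance : Fintype (D.ι i))

/-- Augmented differentials: the generator row in degree `0`. -/
def dA (D : LRData K d I) : ∀ i, Matrix (pi' K D i) (pi' K D (i+1)) (MvPolynomial (Fin n) K)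
  | 0 => Matrix.of fun _ k => D.g k
  | (i+1) => D.A i

lemma dex (D : LRData K d I) (i : ℕ) (x : pi' K D (i+1) → MvPolynomial (Fin n) K) :
    (dA K D i).mulVec x = 0 ↔ ∃ y, (dA K D (i+1)).mulVec y = x := by
  cases i with
  | zero =>
    have : (dA K D 0).mulVec x = 0 ↔ ∑ k, D.g k * x k = 0 := by
      constructor
      · intro h
        have := congrFun h ()
        exact this
      · intro h
        funext p
        cases p
        exact h
    rw [this]
    exact D.hsyz x
  | succ i => exact D.hex i x


open MvPolynomial Matrix
variable {n : ℕ} (K : Type) [Field K]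
variable {d : ℕ} {I J : Ideal (MvPolynomial (Fin n) K)} {m : MvPolynomial (Fin n) K}

lemma homog_neg {p : MvPolynomial (Fin n) K} {k : ℕ} (hp : p.IsHomogeneous k) :
    (-p).IsHomogeneous k := by
  intro c hc
  apply hp
  rw [coeff_neg] at hc
  exact fun h => hc (by rw [h, neg_zero])

lemma lr_cone (hm : m.IsHomogeneous d) (hI : LRData K d I) (hJ : LRData K 1 J)
    (hcolon : ∀ s, s * m ∈ I ↔ s ∈ J) :
    Nonempty (LRData K d (I ⊔ Ideal.span {m})) := by
  classical
  obtain ⟨phi, hpH, hp0, hpL⟩ := phi_exists K hI hJ hcolon hm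
  -- the key row computation: multiplying the generator row with `phi 0`
  haveI : Unique (pi' K hJ 0) := ⟨⟨()⟩, fun a => rfl⟩
  have hKill0 : ∀ v : hJ.ι 0 → MvPolynomial (Fin n) K,
      ∑ j, hI.g j * (phi 0).mulVec v j = m * ∑ k, hJ.g k * v k := by
    intro v
    have e0 : ∀ j, hI.g j * (phi 0).mulVec v j = ∑ k, hI.g j * phi 0 j k * v k := fun j => by
      rw [Matrix.mulVec, dotProduct, Finset.mul_sum]
      exact Finset.sum_congr rfl fun k _ => (mul_assoc _ _ _).symm
    rw [Finset.sum_congr rfl (fun j _ => e0 j), Finset.sum_comm]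
    have e1 : ∀ k, ∑ j, hI.g j * phi 0 j k * v k = m * (hJ.g k * v k) := fun k => by
      rw [← Finset.sum_mul, hp0 k, mul_assoc]
    rw [Finset.sum_congr rfl (fun k _ => e1 k), ← Finset.mul_sum]
  refine ⟨⟨fun i => pi' K hJ i ⊕ hI.ι i, Sum.elim (fun _ => m) hI.g,
    fun i => Matrix.fromBlocks (-(dA K hJ i)) 0 (phi i) (hI.A i),
    ?_, ?_, ?_, ?_, ?_⟩⟩
  · intro p
    cases p with
    | inl u => exact hm
    | inr j => exact hI.hg j
  · intro i p q
    cases p with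
    | inl k =>
      cases q with
      | inl k' =>
        show ((-(dA K hJ i)) k k').IsHomogeneous 1
        cases i with
        | zero => exact homog_neg K (hJ.hg k')
        | succ i => exact homog_neg K (hJ.hA i k k')
      | inr l => exact isHomogeneous_zero _ _ _
    | inr j =>
      cases q with
      | inl k' => exact hpH i j k'
      | inr l => exact hI.hA i j l
  · rw [Set.Sum.elim_range, Set.range_const, Ideal.span_union, ← hI.hspan]
    exact sup_comm _ _
  · intro x
    have hsum : ∑ p, Sum.elim (fun _ => m) hI.g p * x p
        = m * x (Sum.inl ()) + ∑ j, hI.g j * x (Sum.inr j) := by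
      rw [Fintype.sum_sum_type, Fintype.sum_unique]
      rfl
    rw [hsum]
    constructor
    · intro hx
      have hmemI : (x (Sum.inl ())) * m ∈ I := by
        rw [mul_comm, eq_neg_of_add_eq_zero_left hx]
        exact neg_mem (Ideal.sum_mem _ fun j _ =>
          Ideal.mul_mem_right _ _ (hI.hspan.ge (Ideal.subset_span ⟨j, rfl⟩)))
      obtain ⟨c, hc⟩ := (Submodule.mem_span_range_iff_exists_fun _).mp (hJ.hspan.le ((hcolon _).mp hmemI))
      have hcc : ∑ k, hJ.g k * c k = x (Sum.inl ()) := by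
        rw [← hc]
        exact Finset.sum_congr rfl fun k _ => by rw [smul_eq_mul, mul_comm]
      have hsyzv : ∑ j, hI.g j * (fun j => x (Sum.inr j) + (phi 0).mulVec c j) j = 0 := by
        have : ∀ j, hI.g j * (x (Sum.inr j) + (phi 0).mulVec c j)
            = hI.g j * x (Sum.inr j) + hI.g j * (phi 0).mulVec c j := fun j => mul_add _ _ _
        rw [Finset.sum_congr rfl (fun j _ => this j), Finset.sum_add_distrib, hKill0 c, hcc,
          add_comm]
        exact hx
      obtain ⟨yG, hyG⟩ := (hI.hsyz _).mp hsyzv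
      refine ⟨Sum.elim (-c) yG, ?_⟩
      erw [Matrix.fromBlocks_mulVec]
      erw [Sum.elim_comp_inl, Sum.elim_comp_inr]
      funext p
      cases p with
      | inl u =>
        cases u
        simp only [Sum.elim_inl, Matrix.zero_mulVec, add_zero, Matrix.neg_mulVec,
          Matrix.mulVec_neg, neg_neg, Pi.add_apply, Pi.zero_apply]
        rw [← hcc]
        show ∑ k, (-(hJ.g k)) * (-c k) = ∑ k, hJ.g k * c k
        simp
      | inr j =>
        simp only [Sum.elim_inr, Matrix.mulVec_neg, Pi.add_apply, Pi.neg_apply]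
        have := congrFun hyG j
        show (phi 0 *ᵥ (-c)) j + (hI.A 0 *ᵥ yG) j = x (Sum.inr j)
        rw [this, Matrix.mulVec_neg]
        simp only [Pi.neg_apply]
        ring
    · rintro ⟨y, hy⟩
      have hyel : y = Sum.elim (y ∘ Sum.inl) (y ∘ Sum.inr) := funext fun p => by cases p <;> rfl
      rw [hyel] at hy
      erw [Matrix.fromBlocks_mulVec] at hy
      rw [Sum.elim_comp_inl, Sum.elim_comp_inr] at hy
      have h1 : x (Sum.inl ()) = -(∑ k, hJ.g k * (y (Sum.inl k))) := by
        have := congrFun hy (Sum.inl ())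
        simp only [Sum.elim_inl, Matrix.zero_mulVec, add_zero, Matrix.neg_mulVec,
          Pi.neg_apply] at this
        rw [← this]
        rfl
      have h2 : ∀ j, x (Sum.inr j)
          = (phi 0).mulVec (y ∘ Sum.inl) j + (hI.A 0).mulVec (y ∘ Sum.inr) j := fun j => by
        have := congrFun hy (Sum.inr j)
        simp only [Sum.elim_inr, Pi.add_apply] at this
        exact this.symm
      have h3 : ∑ j, hI.g j * x (Sum.inr j) = m * ∑ k, hJ.g k * (y (Sum.inl k)) := by
        have : ∀ j, hI.g j * x (Sum.inr j) = hI.g j * (phi 0).mulVec (y ∘ Sum.inl) j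
            + hI.g j * (hI.A 0).mulVec (y ∘ Sum.inr) j := fun j => by rw [h2 j, mul_add]
        rw [Finset.sum_congr rfl (fun j _ => this j), Finset.sum_add_distrib,
          hKill0 (y ∘ Sum.inl)]
        have hz : ∑ j, hI.g j * (hI.A 0).mulVec (y ∘ Sum.inr) j = 0 :=
          (hI.hsyz _).mpr ⟨_, rfl⟩
        rw [hz, add_zero]
        rfl
      rw [h1, h3]
      ring
  · intro i x
    exact cone_ex (dA K hJ i) (dA K hJ (i+1)) (dA K hI (i+1)) (dA K hI (i+2))
      (phi i) (phi (i+1)) (dex K hJ i) (dex K hI (i+1)) (hpL i) x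


open MvPolynomial Matrix
variable {n : ℕ} (K : Type) [Field K]

lemma span_mul_mem {G : Set (MvPolynomial (Fin n) K)} {I : Ideal (MvPolynomial (Fin n) K)}
    {m : MvPolynomial (Fin n) K} (hgen : ∀ x ∈ G, x * m ∈ I)
    {s : MvPolynomial (Fin n) K} (hs : s ∈ Ideal.span G) : s * m ∈ I := by
  induction hs using Submodule.span_induction with
  | mem x hx => exact hgen x hx
  | zero => simpa using I.zero_mem
  | add x y _ _ hx hy => rw [add_mul]; exact I.add_mem hx hy
  | smul r x _ hx => rw [smul_eq_mul, mul_assoc]; exact Ideal.mul_mem_left _ _ hx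

lemma colon_X {T : Finset (Fin n)} {t : Fin n} (ht : t ∉ T) (s : MvPolynomial (Fin n) K) :
    s * X t ∈ Ideal.span ((fun i => (X i : MvPolynomial (Fin n) K)) '' ↑T) ↔
      s ∈ Ideal.span ((fun i => (X i : MvPolynomial (Fin n) K)) '' ↑T) := by
  constructor
  · intro h
    rw [mem_ideal_span_X_image] at h ⊢
    intro c hc
    have hmem : c + Finsupp.single t 1 ∈ (s * X t).support := by
      rw [mem_support_iff, coeff_mul_X]
      exact mem_support_iff.mp hc
    obtain ⟨i, hiT, hi⟩ := h _ hmem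
    refine ⟨i, hiT, ?_⟩
    have hit : t ≠ i := fun h' => ht (h' ▸ hiT)
    rwa [Finsupp.add_apply, Finsupp.single_apply, if_neg hit, add_zero] at hi
  · intro h
    exact Ideal.mul_mem_right _ _ h

lemma koszul (T : Finset (Fin n)) :
    Nonempty (LRData K 1 (Ideal.span ((fun i => (X i : MvPolynomial (Fin n) K)) '' ↑T))) := by
  classical
  induction T using Finset.induction_on with
  | empty =>
    have h0 : Ideal.span ((fun i => (X i : MvPolynomial (Fin n) K)) '' ↑(∅ : Finset (Fin n)))
        = ⊥ := by simp
    rw [h0]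
    exact lr_bot K 1
  | @insert a T ha ih =>
    obtain ⟨DJ⟩ := ih
    have hcone := lr_cone K (isHomogeneous_X K a) DJ DJ (fun s => colon_X K ha s)
    have he : Ideal.span ((fun i => (X i : MvPolynomial (Fin n) K)) '' ↑(insert a T))
        = Ideal.span ((fun i => (X i : MvPolynomial (Fin n) K)) '' ↑T) ⊔
          Ideal.span {(X a : MvPolynomial (Fin n) K)} := by
      rw [Finset.coe_insert, Set.image_insert_eq, Ideal.span_insert]
      exact sup_comm _ _
    rw [he]
    exact hcone


open MvPolynomial Matrix
variable {n : ℕ} (K : Type) [Field K]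

lemma monOf_homog (v : Mon n) : (monOf K v).IsHomogeneous (mdeg v) := by
  apply isHomogeneous_monomial
  have h1 : ∀ i, (Finsupp.equivFunOnFinite.symm v) i = v i := fun i => by simp
  rw [Finsupp.degree_apply, Finset.sum_congr rfl (fun i _ => h1 i), mdeg]
  refine Finset.sum_subset (Finset.subset_univ _) (fun i _ hi => ?_)
  rw [← h1 i]
  exact Finsupp.notMem_support_iff.mp hi

variable {r : ℕ} (u : Fin r → Mon n)

lemma mem_Iu_iff (j : Fin r) (p : MvPolynomial (Fin n) K) :
    p ∈ Ideal.span ((fun k => monOf K (u k)) '' {k | k < j}) ↔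
      ∀ c ∈ p.support, ∃ k : Fin r, k < j ∧ Finsupp.equivFunOnFinite.symm (u k) ≤ c := by
  have himg : (fun k => monOf K (u k)) '' {k | k < j}
      = (fun s0 => monomial s0 (1:K)) ''
          ((fun k => Finsupp.equivFunOnFinite.symm (u k)) '' {k | k < j}) := by
    rw [Set.image_image]
    rfl
  rw [himg, mem_ideal_span_monomial_image]
  constructor
  · intro h c hc
    obtain ⟨si, hsi, hle⟩ := h c hc
    obtain ⟨k, hk, rfl⟩ := hsi
    exact ⟨k, hk, hle⟩
  · intro h c hc
    obtain ⟨k, hk, hle⟩ := h c hc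
    exact ⟨_, ⟨k, hk, rfl⟩, hle⟩

lemma colon_u
    (hLQ : ∀ j k : Fin r, k < j →
      ∃ i, u j i < u k i ∧
        ∃ k', k' < j ∧ ∀ l, u k' l ≤ u j l + (if l = i then 1 else 0))
    (j : Fin r) (T : Finset (Fin n))
    (hT : ∀ i : Fin n, i ∈ T ↔
      (X i) * monOf K (u j) ∈ Ideal.span ((fun k => monOf K (u k)) '' {k | k < j}))
    (s : MvPolynomial (Fin n) K) :
    s * monOf K (u j) ∈ Ideal.span ((fun k => monOf K (u k)) '' {k | k < j}) ↔
      s ∈ Ideal.span ((fun i => (X i : MvPolynomial (Fin n) K)) '' ↑T) := by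
  classical
  constructor
  · intro hs
    rw [mem_ideal_span_X_image]
    intro c hc
    have hmem : c + Finsupp.equivFunOnFinite.symm (u j) ∈ (s * monOf K (u j)).support := by
      rw [mem_support_iff, monOf, coeff_mul_monomial, mul_one]
      exact mem_support_iff.mp hc
    obtain ⟨k, hkj, hle⟩ := (mem_Iu_iff K u j _).mp hs _ hmem
    obtain ⟨i, hui, k', hk'j, hbound⟩ := hLQ j k hkj
    refine ⟨i, (hT i).mpr ?_, ?_⟩
    · have hXm : (X i) * monOf K (u j)
          = monomial (Finsupp.equivFunOnFinite.symm (u j) + Finsupp.single i 1) (1 : K) := by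
        rw [monOf, show (X i : MvPolynomial (Fin n) K) = monomial (Finsupp.single i 1) 1 from rfl,
          monomial_mul, one_mul, add_comm]
      rw [hXm, mem_Iu_iff]
      intro c' hc'
      rw [support_monomial, if_neg one_ne_zero, Finset.mem_singleton] at hc'
      subst hc'
      refine ⟨k', hk'j, Finsupp.le_def.mpr fun l => ?_⟩
      have hb := hbound l
      simp only [Finsupp.add_apply, Finsupp.single_apply, Finsupp.equivFunOnFinite_symm_apply_apply]
      by_cases hl : l = i
      · subst hl
        simp only [if_pos rfl] at hb ⊢
        exact hb
      · rw [if_neg hl] at hb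
        rw [if_neg (fun h : i = l => hl h.symm)]
        simpa using hb
    · have h6 := Finsupp.le_def.mp hle i
      simp only [Finsupp.add_apply, Finsupp.equivFunOnFinite_symm_apply_apply] at h6
      omega
  · intro hs
    refine span_mul_mem K ?_ hs
    rintro x ⟨i, hiT, rfl⟩
    exact (hT i).mp hiT



end LRAux

/-- If a monomial ideal generated in a single degree has linear quotients with respect
to the ordering `u_1, …, u_r` of its minimal generators, then it has quotients with
linear resolution with respect to that ordering: `I` has a linear resolution and each
colon ideal `(u_1,…,u_{j-1}) : u_j` has a linear resolution (being generated by
variables, i.e. in degree `1`). -/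
theorem stmt_14 (K : Type) [Field K] {n d r : ℕ} (u : Fin r → Mon n)
    (hinj : Function.Injective u) (hdeg : ∀ j, mdeg (u j) = d)
    (hLQ : ∀ j k : Fin r, k < j →
      ∃ i, u j i < u k i ∧
        ∃ k', k' < j ∧ ∀ l, u k' l ≤ u j l + (if l = i then 1 else 0)) :
    HasLinearResolution K d (Ideal.span (Set.range fun j => monOf K (u j))) ∧
    ∀ j : Fin r, (0 : ℕ) < (j : ℕ) →
      HasLinearResolution K 1
        (Submodule.colon
          (Ideal.span ((fun k => monOf K (u k)) '' {k | k < j}))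
          (Ideal.span {monOf K (u j)})) := by

  classical
  open MvPolynomial in
  have hmh : ∀ j : Fin r, (monOf K (u j)).IsHomogeneous d :=
    fun j => hdeg j ▸ LRAux.monOf_homog K (u j)
  let T : Fin r → Finset (Fin n) := fun j => Finset.univ.filter (fun i =>
    (MvPolynomial.X i) * monOf K (u j) ∈
      Ideal.span ((fun k => monOf K (u k)) '' {k | k < j}))
  have hT : ∀ (j : Fin r) (i : Fin n), i ∈ T j ↔ (MvPolynomial.X i) * monOf K (u j) ∈
      Ideal.span ((fun k => monOf K (u k)) '' {k | k < j}) := fun j i => by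
    simp [T]
  have hcolon : ∀ j : Fin r, ∀ s, s * monOf K (u j) ∈
      Ideal.span ((fun k => monOf K (u k)) '' {k | k < j}) ↔
      s ∈ Ideal.span ((fun i => (MvPolynomial.X i : MvPolynomial (Fin n) K)) '' ↑(T j)) :=
    fun j => LRAux.colon_u K u hLQ j (T j) (hT j)
  have main : ∀ t : ℕ, t ≤ r → Nonempty (LRAux.LRData K d
      (Ideal.span ((fun k => monOf K (u k)) '' {k : Fin r | (k : ℕ) < t}))) := by
    intro t
    induction t with
    | zero =>
      intro _
      have h0 : {k : Fin r | (k : ℕ) < 0} = ∅ := by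
        ext k
        simp
      rw [h0, Set.image_empty, Ideal.span_empty]
      exact LRAux.lr_bot K d
    | succ t ih =>
      intro ht
      have ht' : t < r := ht
      have hset : {k : Fin r | (k : ℕ) < t + 1}
          = insert (⟨t, ht'⟩ : Fin r) {k : Fin r | (k : ℕ) < t} := by
        ext k
        simp only [Set.mem_setOf_eq, Set.mem_insert_iff, Nat.lt_succ_iff_lt_or_eq]
        constructor
        · rintro (h | h)
          · exact Or.inr h
          · exact Or.inl (Fin.ext h)
        · rintro (h | h)
          · subst h
            exact Or.inr rfl
          · exact Or.inl h
      rw [hset, Set.image_insert_eq, Ideal.span_insert, sup_comm]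
      obtain ⟨DI⟩ := ih (le_of_lt ht')
      obtain ⟨DJ⟩ := LRAux.koszul K (T ⟨t, ht'⟩)
      refine LRAux.lr_cone K (hmh ⟨t, ht'⟩) DI DJ ?_
      have hsets : {k : Fin r | k < (⟨t, ht'⟩ : Fin r)} = {k : Fin r | (k : ℕ) < t} := rfl
      intro s
      have h7 := hcolon ⟨t, ht'⟩ s
      rwa [hsets] at h7
  constructor
  · have hrange : (Set.range fun j => monOf K (u j))
        = (fun k => monOf K (u k)) '' {k : Fin r | (k : ℕ) < r} := by
      have huniv : {k : Fin r | (k : ℕ) < r} = Set.univ := by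
        ext k
        simp [k.isLt]
      rw [huniv, Set.image_univ]
    rw [hrange]
    exact LRAux.lr_to_hlr K (main r le_rfl)
  · intro j hj
    have hcolid : Submodule.colon
        (Ideal.span ((fun k => monOf K (u k)) '' {k | k < j})) (Ideal.span {monOf K (u j)})
        = Ideal.span ((fun i => (MvPolynomial.X i : MvPolynomial (Fin n) K)) '' ↑(T j)) := by
      ext s
      rw [Ideal.mem_colon_span_singleton]
      exact hcolon j s
    rw [hcolid]
    exact LRAux.lr_to_hlr K (LRAux.koszul K (T j))
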